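/- If a trace satisfies PRAM consistency with respect to process p₀ (i.e., there exists a legal schedule of all writes and p₀'s reads respecting program order and write-to order), then the operation graph obtained by starting with program-order and write-to-order edges and iteratively adding Rule C edges until closure is acyclic. -/

import Mathlib

/-- Abstract data of a read/write trace (restricted to the operations visible to the
distinguished process `p₀ = 0`, i.e. all writes plus `p₀`'s reads): operation type,
variable, issuing process, program order, and the dictating-write map `D` (well defined
since writes assign unique values per variable). -/
structure PramTrace (ι : Type) where
  isRead : ι → Bool
  var : ι → ℕ
  proc : ι → ℕ
  po : ι → ι → Prop
  D : ι → ι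
  po_trans : Transitive po
  po_irrefl : Irreflexive po
  po_proc : ∀ a b, po a b → proc a = proc b
  po_total : ∀ a b, proc a = proc b → a ≠ b → po a b ∨ po b a
  reads_p0 : ∀ r, isRead r = true → proc r = 0
  D_write : ∀ r, isRead r = true → isRead (D r) = false
  D_var : ∀ r, isRead r = true → var (D r) = var r

variable {ι : Type} [Fintype ι]

/-- `σ` is (the numbering of) a legal schedule of the operations respecting program
order and write-to order: it is injective, respects `≺_PO` and `≺_WR`, and every read
reads the latest preceding write on its variable (i.e. its dictating write precedes it
with no other write on the same variable in between). -/
def PramTrace.Legal (T : PramTrace ι) (σ : ι → ℕ) : Prop :=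
  Function.Injective σ ∧
  (∀ a b, T.po a b → σ a < σ b) ∧
  (∀ r, T.isRead r = true → σ (T.D r) < σ r) ∧
  (∀ r w', T.isRead r = true → T.isRead w' = false → T.var w' = T.var r →
    w' ≠ T.D r → ¬ (σ (T.D r) < σ w' ∧ σ w' < σ r))

/-- The trace satisfies PRAM consistency (w.r.t. the distinguished process `p₀`):
there is a legal schedule of its visible operations respecting program order and
write-to order. -/
def PramTrace.PRAM (T : PramTrace ι) : Prop := ∃ σ : ι → ℕ, T.Legal σ

/-- `E` contains the program-order edges and write-to edges, and is closed under
Rule C: for every triple `w = D(r)`, `r`, `w'` on the same variable with `w' ≠ w` and a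
directed path from `w'` to `r`, the edge `w' → w` is in `E`. -/
def PramTrace.ClosedG (T : PramTrace ι) (E : ι → ι → Prop) : Prop :=
  (∀ a b, T.po a b → E a b) ∧
  (∀ r, T.isRead r = true → E (T.D r) r) ∧
  (∀ r w', T.isRead r = true → T.isRead w' = false → T.var w' = T.var r →
    w' ≠ T.D r → Relation.TransGen E w' r → E w' (T.D r))

/-- The closure of the operation graph: the least relation containing the
program-order and write-to edges and closed under Rule C. -/
def PramTrace.closure (T : PramTrace ι) (a b : ι) : Prop :=
  ∀ E : ι → ι → Prop, T.ClosedG E → E a b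

/-- A directed graph (relation) is acyclic if no vertex lies on a directed cycle. -/
def Acyclic {α : Type} (E : α → α → Prop) : Prop := ∀ a, ¬ Relation.TransGen E a a

/-- If the trace satisfies PRAM consistency w.r.t. `p₀`, then the closure of the
operation graph under program-order edges, write-to edges, and Rule C is acyclic. -/
theorem stmt3 (T : PramTrace ι) (hpram : T.PRAM) : Acyclic T.closure := by
  obtain ⟨σ, hinj, hpo, hD, hno⟩ := hpram
  have htr : Transitive (fun x y : ι => σ x < σ y) := fun _ _ _ h h' => lt_trans h h'
  have hE : T.ClosedG (fun x y => σ x < σ y) := by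
    refine ⟨hpo, hD, ?_⟩
    intro r w' hr hw hv hne htg
    rw [@Relation.transGen_eq_self ι (fun x y : ι => σ x < σ y) ⟨fun _ _ _ h h' => htr h h'⟩] at htg
    have hle : σ w' ≤ σ (T.D r) := by
      by_contra h
      exact hno r w' hr hw hv hne ⟨lt_of_not_ge h, htg⟩
    exact lt_of_le_of_ne hle (fun h => hne (hinj h))
  intro a hcyc
  have : Relation.TransGen (fun x y : ι => σ x < σ y) a a :=
    Relation.TransGen.mono (fun x y h => h _ hE) a a hcyc
  rw [@Relation.transGen_eq_self ι (fun x y : ι => σ x < σ y) ⟨fun _ _ _ h h' => htr h h'⟩] at this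
  exact lt_irrefl _ this
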